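/- Let A, B ⊆ (0,∞) be Lebesgue measurable sets with respective Lebesgue density points a, b > 0. Then there exist sequences of positive rationals qₙ and points aₙ ∈ A, bₙ ∈ B with aₙ → a, bₙ → b and bₙ = qₙ · aₙ for all n. -/

import Mathlib

open MeasureTheory Filter

/-- `a` is a Lebesgue density point of `A`. -/
def IsDensityPoint (A : Set ℝ) (a : ℝ) : Prop :=
  Tendsto (fun δ : ℝ => volume (A ∩ Set.Ioo (a - δ) (a + δ)) / ENNReal.ofReal (2 * δ))
    (nhdsWithin 0 (Set.Ioi 0)) (nhds 1)

open scoped ENNReal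

lemma density_bound {A : Set ℝ} (hAm : MeasurableSet A) {a : ℝ}
    (hda : IsDensityPoint A a) :
    ∃ δ₀ > 0, ∀ δ : ℝ, 0 < δ → δ < δ₀ →
      volume (Set.Ioo (a - δ) (a + δ) \ A) ≤ ENNReal.ofReal (δ / 4) := by
  have h78 : ENNReal.ofReal (7/8) < 1 := by
    rw [← ENNReal.ofReal_one]
    exact ENNReal.ofReal_lt_ofReal_iff_of_nonneg (by norm_num) |>.mpr (by norm_num)
  have hev := hda.eventually (eventually_gt_nhds h78)
  rw [eventually_nhdsWithin_iff, Metric.eventually_nhds_iff] at hev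
  obtain ⟨δ₀, hδ₀, H⟩ := hev
  refine ⟨δ₀, hδ₀, fun δ hδ hδδ => ?_⟩
  have hI : volume (Set.Ioo (a - δ) (a + δ)) = ENNReal.ofReal (2 * δ) := by
    rw [Real.volume_Ioo]; ring_nf
  have hratio : ENNReal.ofReal (7/8) <
      volume (A ∩ Set.Ioo (a - δ) (a + δ)) / ENNReal.ofReal (2 * δ) := by
    apply H
    · rw [Real.dist_eq, sub_zero, abs_of_pos hδ]; exact hδδ
    · exact hδ
  have hc0 : ENNReal.ofReal (2 * δ) ≠ 0 := ne_of_gt (ENNReal.ofReal_pos.mpr (by linarith))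
  have hcT : ENNReal.ofReal (2 * δ) ≠ ⊤ := ENNReal.ofReal_ne_top
  have hmul : ENNReal.ofReal (7/8) * ENNReal.ofReal (2 * δ) <
      volume (A ∩ Set.Ioo (a - δ) (a + δ)) :=
    (ENNReal.lt_div_iff_mul_lt (Or.inl hc0) (Or.inl hcT)).mp hratio
  have hfin : volume (A ∩ Set.Ioo (a - δ) (a + δ)) ≠ ⊤ := by
    rw [← lt_top_iff_ne_top]
    refine lt_of_le_of_lt (measure_mono Set.inter_subset_right) ?_
    rw [hI]; exact ENNReal.ofReal_lt_top
  have hdiff : volume (Set.Ioo (a - δ) (a + δ) \ A)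
      = volume (Set.Ioo (a - δ) (a + δ)) - volume (A ∩ Set.Ioo (a - δ) (a + δ)) := by
    rw [← Set.diff_inter_self_eq_diff]
    exact measure_diff Set.inter_subset_right (hAm.inter measurableSet_Ioo).nullMeasurableSet hfin
  rw [hdiff, hI]
  calc ENNReal.ofReal (2 * δ) - volume (A ∩ Set.Ioo (a - δ) (a + δ))
      ≤ ENNReal.ofReal (2 * δ) - ENNReal.ofReal (7/8) * ENNReal.ofReal (2 * δ) :=
        tsub_le_tsub_left hmul.le _
    _ ≤ ENNReal.ofReal (δ / 4) := by
        rw [← ENNReal.ofReal_mul (by norm_num), ← ENNReal.ofReal_sub _ (by positivity)]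
        apply ENNReal.ofReal_le_ofReal; nlinarith

set_option maxHeartbeats 1000000 in
lemma key_step (A B : Set ℝ)
    (hAm : MeasurableSet A) (hBm : MeasurableSet B)
    (a b : ℝ) (ha : 0 < a) (hb : 0 < b)
    (hda : IsDensityPoint A a) (hdb : IsDensityPoint B b)
    (r : ℝ) (hr : 0 < r) :
    ∃ q : ℚ, ∃ x : ℝ, 0 < q ∧ x ∈ A ∧ (q : ℝ) * x ∈ B ∧ |x - a| < r ∧ |(q : ℝ) * x - b| < r := by
  obtain ⟨δ₀, hδ₀, HA⟩ := density_bound hAm hda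
  obtain ⟨η₀, hη₀, HB⟩ := density_bound hBm hdb
  obtain ⟨δ, hδpos, hδ1, hδ2, hδ3, hδ4⟩ :
      ∃ δ : ℝ, 0 < δ ∧ δ < δ₀ ∧ δ * (4 * b) < η₀ * a ∧ δ < r ∧ δ * (4 * b) < r * a := by
    refine ⟨min δ₀ (min (η₀ * a / (4 * b)) (min r (r * a / (4 * b)))) / 2, ?_, ?_, ?_, ?_, ?_⟩
    · have h1 : 0 < η₀ * a / (4 * b) := by positivity
      have h2 : 0 < r * a / (4 * b) := by positivity
      have : 0 < min δ₀ (min (η₀ * a / (4 * b)) (min r (r * a / (4 * b)))) := by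
        simp only [lt_min_iff]; exact ⟨hδ₀, h1, hr, h2⟩
      linarith
    · have h : min δ₀ (min (η₀ * a / (4 * b)) (min r (r * a / (4 * b)))) ≤ δ₀ := min_le_left _ _
      linarith
    · have h : min δ₀ (min (η₀ * a / (4 * b)) (min r (r * a / (4 * b)))) ≤ η₀ * a / (4 * b) :=
        le_trans (min_le_right _ _) (min_le_left _ _)
      have hp : 0 < η₀ * a / (4 * b) := by positivity
      rw [← lt_div_iff₀ (by positivity : (0:ℝ) < 4 * b)]
      linarith
    · have h : min δ₀ (min (η₀ * a / (4 * b)) (min r (r * a / (4 * b)))) ≤ r :=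
        le_trans (min_le_right _ _) (le_trans (min_le_right _ _) (min_le_left _ _))
      linarith
    · have h : min δ₀ (min (η₀ * a / (4 * b)) (min r (r * a / (4 * b)))) ≤ r * a / (4 * b) :=
        le_trans (min_le_right _ _) (le_trans (min_le_right _ _) (min_le_right _ _))
      have hp : 0 < r * a / (4 * b) := by positivity
      rw [← lt_div_iff₀ (by positivity : (0:ℝ) < 4 * b)]
      linarith
  -- choose the rational
  have hεpos : 0 < min (b / (2 * a)) (δ * b / (4 * a ^ 2)) := by
    have h1 : 0 < b / (2 * a) := by positivity
    have h2 : 0 < δ * b / (4 * a ^ 2) := by positivity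
    exact lt_min h1 h2
  obtain ⟨q, hq⟩ := exists_rat_near (b / a) hεpos
  set qr : ℝ := (q : ℝ) with hqrdef
  have hq1 : |b / a - qr| < b / (2 * a) := lt_of_lt_of_le hq (min_le_left _ _)
  have hq2 : |b / a - qr| < δ * b / (4 * a ^ 2) := lt_of_lt_of_le hq (min_le_right _ _)
  have hqlow : b / (2 * a) ≤ qr := by
    have h := (abs_lt.mp hq1).2
    have : b / a - b / (2 * a) = b / (2 * a) := by field_simp; ring
    linarith
  have hqpos : 0 < qr := lt_of_lt_of_le (by positivity) hqlow
  have hqhigh : qr ≤ 3 * b / (2 * a) := by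
    have h := (abs_lt.mp hq1).1
    have : b / a + b / (2 * a) = 3 * b / (2 * a) := by field_simp; ring
    linarith
  have hbq : |b - a * qr| ≤ δ / 2 * qr := by
    have e : b - a * qr = a * (b / a - qr) := by field_simp
    calc |b - a * qr| = a * |b / a - qr| := by
          rw [e, abs_mul, abs_of_pos ha]
      _ ≤ a * (δ * b / (4 * a ^ 2)) := mul_le_mul_of_nonneg_left hq2.le ha.le
      _ = δ / 2 * (b / (2 * a)) := by field_simp; ring
      _ ≤ δ / 2 * qr := mul_le_mul_of_nonneg_left hqlow (by positivity)
  have hqb : qr * (2 * a) ≤ 3 * b := by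
    rw [← le_div_iff₀ (by positivity : (0:ℝ) < 2 * a)]; exact hqhigh
  obtain ⟨η, hηdef, hηpos, hη1, hη2⟩ :
      ∃ η : ℝ, η = 2 * qr * δ ∧ 0 < η ∧ η < η₀ ∧ η < r := by
    refine ⟨2 * qr * δ, rfl, by positivity, ?_, ?_⟩
    · have h5 : qr * (2 * a) * δ ≤ 3 * b * δ := mul_le_mul_of_nonneg_right hqb hδpos.le
      have h6 : 2 * qr * δ * a < η₀ * a := by nlinarith [mul_pos hδpos hb]
      exact lt_of_mul_lt_mul_right h6 ha.le
    · have h5 : qr * (2 * a) * δ ≤ 3 * b * δ := mul_le_mul_of_nonneg_right hqb hδpos.le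
      have h6 : 2 * qr * δ * a < r * a := by nlinarith [mul_pos hδpos hb]
      exact lt_of_mul_lt_mul_right h6 ha.le
  have habs := abs_le.mp hbq
  set I : Set ℝ := Set.Ioo (a - δ) (a + δ) with hIdef
  set J : Set ℝ := Set.Ioo (b - η) (b + η) with hJdef
  have hIsub : I ⊆ (qr * ·) ⁻¹' J := by
    intro x hx
    rw [hIdef, Set.mem_Ioo] at hx
    simp only [Set.mem_preimage, hJdef, Set.mem_Ioo]
    constructor
    · have h1 : qr * (a - δ) < qr * x := mul_lt_mul_of_pos_left hx.1 hqpos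
      have h2 : 0 < qr * δ := mul_pos hqpos hδpos
      rw [hηdef]; nlinarith [habs.2]
    · have h1 : qr * x < qr * (a + δ) := mul_lt_mul_of_pos_left hx.2 hqpos
      have h2 : 0 < qr * δ := mul_pos hqpos hδpos
      rw [hηdef]; nlinarith [habs.1]
  have hμA : volume (I \ A) ≤ ENNReal.ofReal (δ / 4) := HA δ hδpos hδ1
  have hμB : volume (J \ B) ≤ ENNReal.ofReal (η / 4) := HB η hηpos hη1
  have hpre : volume ((qr * ·) ⁻¹' (J \ B)) ≤ ENNReal.ofReal (δ / 2) := by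
    rw [Real.volume_preimage_mul_left (ne_of_gt hqpos)]
    calc ENNReal.ofReal |qr⁻¹| * volume (J \ B)
        ≤ ENNReal.ofReal qr⁻¹ * ENNReal.ofReal (η / 4) := by
          rw [abs_of_pos (inv_pos.mpr hqpos)]
          exact mul_le_mul_right hμB _
      _ = ENNReal.ofReal (qr⁻¹ * (η / 4)) :=
          (ENNReal.ofReal_mul (inv_pos.mpr hqpos).le).symm
      _ = ENNReal.ofReal (δ / 2) := by
          congr 1
          rw [hηdef]
          field_simp
          ring
  have hnonempty : (I ∩ (A ∩ (qr * ·) ⁻¹' B)).Nonempty := by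
    rw [Set.nonempty_iff_ne_empty]
    intro hemp
    have hsub : I ⊆ (I \ A) ∪ ((qr * ·) ⁻¹' (J \ B)) := by
      intro x hx
      by_cases hxA : x ∈ A
      · have hxC : x ∉ (qr * ·) ⁻¹' B := fun hc =>
          Set.eq_empty_iff_forall_notMem.mp hemp x ⟨hx, hxA, hc⟩
        exact Or.inr ⟨hIsub hx, hxC⟩
      · exact Or.inl ⟨hx, hxA⟩
    have h1 : volume I ≤ ENNReal.ofReal (δ / 4) + ENNReal.ofReal (δ / 2) :=
      le_trans (measure_mono hsub)
        (le_trans (measure_union_le _ _) (add_le_add hμA hpre))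
    have h2 : volume I = ENNReal.ofReal (2 * δ) := by
      rw [hIdef, Real.volume_Ioo]; ring_nf
    rw [h2, ← ENNReal.ofReal_add (by positivity) (by positivity)] at h1
    have h3 := (ENNReal.ofReal_le_ofReal_iff (by positivity)).mp h1
    linarith
  obtain ⟨x, hxI, hxA, hxB⟩ := hnonempty
  have hxI' := hxI
  rw [hIdef, Set.mem_Ioo] at hxI'
  have hxJ := Set.mem_preimage.mp (hIsub hxI)
  rw [hJdef, Set.mem_Ioo] at hxJ
  refine ⟨q, x, ?_, hxA, hxB, ?_, ?_⟩
  · have : (0 : ℝ) < (q : ℝ) := hqpos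
    exact_mod_cast this
  · rw [abs_lt]; constructor <;> linarith [hxI'.1, hxI'.2]
  · have hq' : (q : ℝ) = qr := hqrdef.symm
    rw [hq', abs_lt]; constructor <;> linarith [hxJ.1, hxJ.2]

theorem stmt_2 (A B : Set ℝ) (hA : A ⊆ Set.Ioi 0) (hB : B ⊆ Set.Ioi 0)
    (hAm : MeasurableSet A) (hBm : MeasurableSet B)
    (a b : ℝ) (ha : 0 < a) (hb : 0 < b)
    (hda : IsDensityPoint A a) (hdb : IsDensityPoint B b) :
    ∃ (q : ℕ → ℚ) (as bs : ℕ → ℝ),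
      (∀ n, 0 < q n) ∧ (∀ n, as n ∈ A) ∧ (∀ n, bs n ∈ B) ∧
      Tendsto as atTop (nhds a) ∧ Tendsto bs atTop (nhds b) ∧
      ∀ n, bs n = (q n : ℝ) * as n := by
  choose q as h1 h2 h3 h4 h5 using fun n : ℕ =>
    key_step A B hAm hBm a b ha hb hda hdb (1 / ((n : ℝ) + 1)) (by positivity)
  have hlim : Tendsto (fun n : ℕ => 1 / ((n : ℝ) + 1)) atTop (nhds 0) :=
    tendsto_one_div_add_atTop_nhds_zero_nat
  refine ⟨q, as, fun n => (q n : ℝ) * as n, h1, h2, h3, ?_, ?_, fun n => rfl⟩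
  · rw [tendsto_iff_dist_tendsto_zero]
    exact squeeze_zero (fun n => dist_nonneg)
      (fun n => le_of_lt (by simpa [Real.dist_eq] using h4 n)) hlim
  · rw [tendsto_iff_dist_tendsto_zero]
    exact squeeze_zero (fun n => dist_nonneg)
      (fun n => le_of_lt (by simpa [Real.dist_eq] using h5 n)) hlim
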